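/- arXiv:1905.00948 — 2 statements merged into one kernel-verified Lean document; each statement's English description precedes it below -/
import Mathlib

section
/- Let f be a monotone submodular function on a finite ground set V with f(∅) = 0, and let S* be a set of size at most k maximizing f among sets of size ≤ k, with OPT = f(S*). If S ⊆ V satisfies f({e} | S) < OPT/(2k) for every e ∈ S* \ S, then f(S) ≥ OPT/2. -/
open Finset

variable {α : Type*} [DecidableEq α]

/-- A set function is submodular if marginal gains diminish. -/
def Submodular (f : Finset α → ℝ) : Prop :=
  ∀ A B : Finset α, A ⊆ B → ∀ x ∉ B, f (insert x B) - f B ≤ f (insert x A) - f A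

/-- A set function is monotone if larger sets have larger value. -/
def MonotoneFn (f : Finset α → ℝ) : Prop :=
  ∀ A B : Finset α, A ⊆ B → f A ≤ f B

/-- A set function is non-negative. -/
def NonnegFn (f : Finset α → ℝ) : Prop :=
  ∀ A : Finset α, 0 ≤ f A

lemma union_le_sum_marginals (f : Finset α → ℝ) (hsub : Submodular f)
    (S : Finset α) : ∀ T : Finset α,
    f (S ∪ T) ≤ f S + ∑ e ∈ T \ S, (f (insert e S) - f S) := by
  intro T
  induction T using Finset.induction_on with
  | empty => simp
  | @insert x T hx ih =>
    by_cases hxS : x ∈ S ∪ T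
    · have h1 : S ∪ insert x T = S ∪ T := by
        rw [Finset.union_insert, Finset.insert_eq_self.mpr hxS]
      rw [h1]
      rcases Finset.mem_union.mp hxS with h | h
      · have : insert x T \ S = T \ S := by
          rw [Finset.insert_sdiff_of_mem _ h]
        rw [this]; exact ih
      · exact absurd h hx
    · have h1 : S ∪ insert x T = insert x (S ∪ T) := by
        rw [Finset.union_insert]
      have h2 : insert x T \ S = insert x (T \ S) := by
        rw [Finset.insert_sdiff_of_notMem]
        exact fun h => hxS (Finset.mem_union_left _ h)
      have hxTS : x ∉ T \ S := fun h => hxS (Finset.mem_union_right _ (Finset.mem_sdiff.mp h).1)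
      rw [h1, h2, Finset.sum_insert hxTS]
      have := hsub S (S ∪ T) Finset.subset_union_left x hxS
      linarith

theorem small_marginal_gain_half_opt (f : Finset α → ℝ) (k : ℕ) (hk : 1 ≤ k)
    (hmono : MonotoneFn f) (hsub : Submodular f) (hempty : f ∅ = 0)
    (Sstar : Finset α) (hcard : Sstar.card ≤ k)
    (hopt : ∀ A : Finset α, A.card ≤ k → f A ≤ f Sstar)
    (S : Finset α)
    (hgain : ∀ e ∈ Sstar \ S, f (insert e S) - f S < f Sstar / (2 * k)) :
    f S ≥ f Sstar / 2 := by
  have hOPTnn : 0 ≤ f Sstar := by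
    have := hmono ∅ Sstar (Finset.empty_subset _)
    linarith
  have h1 : f Sstar ≤ f (S ∪ Sstar) := hmono _ _ Finset.subset_union_right
  have h2 := union_le_sum_marginals f hsub S Sstar
  have hkpos : (0:ℝ) < 2 * k := by positivity
  have hsum : ∑ e ∈ Sstar \ S, (f (insert e S) - f S) ≤
      (Sstar \ S).card * (f Sstar / (2 * k)) := by
    calc ∑ e ∈ Sstar \ S, (f (insert e S) - f S)
        ≤ ∑ _e ∈ Sstar \ S, f Sstar / (2 * k) :=
          Finset.sum_le_sum fun e he => le_of_lt (hgain e he)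
      _ = (Sstar \ S).card * (f Sstar / (2 * k)) := by
          rw [Finset.sum_const, nsmul_eq_mul]
  have hcard' : ((Sstar \ S).card : ℝ) ≤ k := by
    exact_mod_cast le_trans (Finset.card_le_card (Finset.sdiff_subset)) hcard
  have hbound : ((Sstar \ S).card : ℝ) * (f Sstar / (2 * k)) ≤ f Sstar / 2 := by
    have : ((Sstar \ S).card : ℝ) * (f Sstar / (2 * k)) ≤ k * (f Sstar / (2 * k)) := by
      apply mul_le_mul_of_nonneg_right hcard'
      positivity
    have hkne : (k:ℝ) ≠ 0 := by positivity
    calc ((Sstar \ S).card : ℝ) * (f Sstar / (2 * k)) ≤ k * (f Sstar / (2 * k)) := this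
      _ = f Sstar / 2 := by field_simp
  linarith
end

section
/- Let f be a non-negative monotone submodular function with f(∅) = 0 on a finite ground set, S* a maximizer of f over sets of size at most k, OPT = f(S*), and τ* = OPT/(2k). Suppose S_τ is a set with |S_τ| < k such that every element e ∈ S* \ S_τ satisfies f({e} | S_τ) < τ*. Then OPT ≤ f(S_τ) + OPT/2, hence f(S_τ) ≥ OPT/2. -/
open Finset

variable {α : Type*} [DecidableEq α]

theorem partial_solution_half_opt (f : Finset α → ℝ) (k : ℕ)
    (hnn : NonnegFn f) (hmono : MonotoneFn f) (hsub : Submodular f)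
    (hempty : f ∅ = 0)
    (Sstar : Finset α) (hcard : Sstar.card ≤ k)
    (hopt : ∀ A : Finset α, A.card ≤ k → f A ≤ f Sstar)
    (Sτ : Finset α) (hSτ : Sτ.card < k)
    (hgain : ∀ e ∈ Sstar \ Sτ, f (insert e Sτ) - f Sτ < f Sstar / (2 * k)) :
    f Sstar ≤ f Sτ + f Sstar / 2 ∧ f Sτ ≥ f Sstar / 2 := by
  have key : ∀ T : Finset α,
      f (Sτ ∪ T) - f Sτ ≤ ∑ e ∈ T \ Sτ, (f (insert e Sτ) - f Sτ) := by
    intro T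
    induction T using Finset.induction_on with
    | empty => simp
    | @insert x T' hx ih =>
      by_cases hxS : x ∈ Sτ
      · have h1 : Sτ ∪ insert x T' = Sτ ∪ T' := by
          rw [Finset.union_insert, Finset.insert_eq_self.mpr (Finset.mem_union_left _ hxS)]
        have h2 : insert x T' \ Sτ = T' \ Sτ := Finset.insert_sdiff_of_mem _ hxS
        rw [h1, h2]; exact ih
      · have h2 : insert x T' \ Sτ = insert x (T' \ Sτ) :=
          Finset.insert_sdiff_of_notMem _ hxS
        rw [h2, Finset.sum_insert (by simp [hx])]
        have hmarg : 0 ≤ f (insert x Sτ) - f Sτ :=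
          sub_nonneg.mpr (hmono _ _ (Finset.subset_insert _ _))
        by_cases hxU : x ∈ Sτ ∪ T'
        · have h1 : Sτ ∪ insert x T' = Sτ ∪ T' := by
            rw [Finset.union_insert, Finset.insert_eq_self.mpr hxU]
          rw [h1]; linarith [ih]
        · have h1 : Sτ ∪ insert x T' = insert x (Sτ ∪ T') := Finset.union_insert _ _ _
          rw [h1]
          have hsub' := hsub Sτ (Sτ ∪ T') (Finset.subset_union_left) x hxU
          linarith [ih]
  have hk : (0:ℕ) < k := Nat.pos_of_ne_zero (by omega)
  have hkR : (0:ℝ) < (k:ℝ) := by exact_mod_cast hk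
  have hOPT : 0 ≤ f Sstar := hnn _
  have hτ : 0 ≤ f Sstar / (2 * k) := by positivity
  have hsum : ∑ e ∈ Sstar \ Sτ, (f (insert e Sτ) - f Sτ)
      ≤ (Sstar \ Sτ).card * (f Sstar / (2 * k)) := by
    calc ∑ e ∈ Sstar \ Sτ, (f (insert e Sτ) - f Sτ)
        ≤ ∑ _e ∈ Sstar \ Sτ, f Sstar / (2 * k) :=
          Finset.sum_le_sum (fun e he => le_of_lt (hgain e he))
      _ = (Sstar \ Sτ).card * (f Sstar / (2 * k)) := by
          rw [Finset.sum_const, nsmul_eq_mul]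
  have hcard' : ((Sstar \ Sτ).card : ℝ) ≤ (k : ℝ) := by
    exact_mod_cast le_trans (Finset.card_le_card (Finset.sdiff_subset)) hcard
  have hbound : ((Sstar \ Sτ).card : ℝ) * (f Sstar / (2 * k)) ≤ f Sstar / 2 := by
    have : ((Sstar \ Sτ).card : ℝ) * (f Sstar / (2 * k)) ≤ (k:ℝ) * (f Sstar / (2 * k)) :=
      mul_le_mul_of_nonneg_right hcard' hτ
    calc ((Sstar \ Sτ).card : ℝ) * (f Sstar / (2 * k)) ≤ (k:ℝ) * (f Sstar / (2 * k)) := this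
      _ = f Sstar / 2 := by field_simp
  have hmonoS : f Sstar ≤ f (Sτ ∪ Sstar) := hmono _ _ (Finset.subset_union_right)
  have := key Sstar
  constructor
  · linarith
  · linarith
end
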